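/- arXiv:1704.00520 — 2 statements merged into one kernel-verified Lean document; each statement's English description precedes it below -/
import Mathlib

section
/- Let σ_n > 0, v > 0, ε, m ∈ ℝ and c ≥ 0, and set a = (ε − m)/√(σ_n² + v²). Then the variance of c·Φ((ε − f)/σ_n) when f is distributed according to the density N(· | m, v²) satisfies ∫_ℝ c²·Φ((ε − f)/σ_n)² · N(f | m, v²) df − (∫_ℝ c·Φ((ε − f)/σ_n) · N(f | m, v²) df)² = c² · [Φ(a)·Φ(−a) − 2·T(a, σ_n/√(σ_n² + 2v²))]. -/
open MeasureTheory Real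

/-- Standard normal cumulative distribution function. -/
noncomputable def Phi (x : ℝ) : ℝ :=
  ∫ t in Set.Iic x, Real.exp (-t ^ 2 / 2) / Real.sqrt (2 * Real.pi)

/-- Gaussian probability density with mean `m` and standard deviation `v`. -/
noncomputable def gaussPdf (m v x : ℝ) : ℝ :=
  Real.exp (-(x - m) ^ 2 / (2 * v ^ 2)) / Real.sqrt (2 * Real.pi * v ^ 2)

/-- Owen's t-function. -/
noncomputable def OwenT (h a : ℝ) : ℝ :=
  (1 / (2 * Real.pi)) * ∫ x in (0:ℝ)..a, Real.exp (-h ^ 2 * (1 + x ^ 2) / 2) / (1 + x ^ 2)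

noncomputable def stdg (t : ℝ) : ℝ := Real.exp (-t ^ 2 / 2) / Real.sqrt (2 * Real.pi)

lemma stdg_pos (t : ℝ) : 0 < stdg t := by
  apply div_pos (exp_pos _)
  exact Real.sqrt_pos.2 (by positivity)

lemma stdg_cont : Continuous stdg := by
  unfold stdg
  fun_prop

lemma stdg_le (t : ℝ) : stdg t ≤ 1 / Real.sqrt (2 * Real.pi) := by
  unfold stdg
  have hs : 0 < Real.sqrt (2 * Real.pi) := Real.sqrt_pos.2 (by positivity)
  exact (div_le_div_iff_of_pos_right hs).mpr (Real.exp_le_one_iff.2 (by nlinarith [sq_nonneg t]))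

lemma stdg_integrable : Integrable stdg := by
  have h : Integrable (fun t : ℝ => Real.exp (-(1/2) * t ^ 2)) := integrable_exp_neg_mul_sq (by norm_num)
  have := h.div_const (Real.sqrt (2 * Real.pi))
  convert this using 2 with t
  unfold stdg; ring_nf

lemma integral_stdg : ∫ t : ℝ, stdg t = 1 := by
  have h := integral_gaussian (1/2)
  have h2 : (fun t : ℝ => Real.exp (-(1/2) * t ^ 2)) = fun t : ℝ => Real.exp (-t ^ 2 / 2) := by
    funext t; ring_nf
  rw [h2] at h
  unfold stdg
  rw [integral_div, h]
  have : Real.pi / (1/2) = 2 * Real.pi := by ring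
  rw [this, div_self (ne_of_gt (Real.sqrt_pos.2 (by positivity)))]

lemma Phi_def (x : ℝ) : Phi x = ∫ t in Set.Iic x, stdg t := rfl

lemma Phi_eq (x : ℝ) : Phi x = Phi 0 + ∫ t in (0:ℝ)..x, stdg t := by
  rw [Phi_def, Phi_def]
  have := intervalIntegral.integral_Iic_sub_Iic (stdg_integrable.integrableOn)
    (stdg_integrable.integrableOn) (a := 0) (b := x)
  linarith

lemma hasDerivAt_Phi (x : ℝ) : HasDerivAt Phi (stdg x) x := by
  have h : HasDerivAt (fun u => ∫ t in (0:ℝ)..u, stdg t) (stdg x) x :=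
    intervalIntegral.integral_hasDerivAt_right (stdg_integrable.intervalIntegrable)
      (stdg_cont.stronglyMeasurable.stronglyMeasurableAtFilter)
      stdg_cont.continuousAt
  have : Phi = fun u => Phi 0 + ∫ t in (0:ℝ)..u, stdg t := funext Phi_eq
  rw [this]
  exact (h.const_add (Phi 0))

lemma Phi_cont : Continuous Phi :=
  continuous_iff_continuousAt.2 fun x => (hasDerivAt_Phi x).continuousAt

lemma Phi_nonneg (x : ℝ) : 0 ≤ Phi x :=
  setIntegral_nonneg measurableSet_Iic fun t _ => (stdg_pos t).le

lemma Phi_le_one (x : ℝ) : Phi x ≤ 1 := by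
  rw [Phi_def, ← integral_stdg]
  exact setIntegral_le_integral stdg_integrable (Filter.Eventually.of_forall fun t => (stdg_pos t).le)

lemma Phi_neg (x : ℝ) : Phi (-x) = 1 - Phi x := by
  have h1 : Phi (-x) = ∫ t in Set.Ici x, stdg t := by
    rw [Phi_def]
    have : ∀ t : ℝ, stdg t = stdg (-t) := by
      intro t; unfold stdg; ring_nf
    calc ∫ t in Set.Iic (-x), stdg t = ∫ t in Set.Iic (-x), stdg (-t) := by
          exact setIntegral_congr_fun measurableSet_Iic fun t _ => this t
      _ = ∫ t in Set.Ioi (-(-x)), stdg t := integral_comp_neg_Iic (-x) stdg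
      _ = ∫ t in Set.Ici x, stdg t := by rw [neg_neg, integral_Ici_eq_integral_Ioi]
  have h2 := integral_add_compl (measurableSet_Iic (a := x)) stdg_integrable
  rw [integral_stdg] at h2
  rw [h1, Set.compl_Iic] at *
  rw [integral_Ici_eq_integral_Ioi]
  linarith [h2, Phi_def x]

lemma Phi_tendsto_atBot : Filter.Tendsto Phi Filter.atBot (nhds 0) := by
  have h := MeasureTheory.intervalIntegral_tendsto_integral_Iic 0
    (stdg_integrable.integrableOn) (Filter.tendsto_id (α := ℝ))
  have heq : ∀ x : ℝ, Phi x = Phi 0 - ∫ t in x..(0:ℝ), stdg t := by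
    intro x
    rw [Phi_eq x, intervalIntegral.integral_symm]
    ring
  have := (tendsto_const_nhds (x := Phi 0) (f := Filter.atBot (α := ℝ))).sub h
  rw [← Phi_def] at this
  simp only [sub_self] at this
  refine this.congr fun x => (heq x).symm

lemma sqrt_two_pi_sq {v : ℝ} (hv : 0 < v) :
    Real.sqrt (2 * Real.pi * v ^ 2) = v * Real.sqrt (2 * Real.pi) := by
  rw [show 2 * Real.pi * v ^ 2 = (v * Real.sqrt (2 * Real.pi)) ^ 2 by
    rw [mul_pow, Real.sq_sqrt (by positivity)]; ring]
  exact Real.sqrt_sq (by positivity)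

lemma gaussPdf_eq {v : ℝ} (hv : 0 < v) (m x : ℝ) :
    gaussPdf m v x = stdg ((x - m) / v) / v := by
  unfold gaussPdf stdg
  rw [sqrt_two_pi_sq hv, div_div,
    show -((x - m) / v) ^ 2 / 2 = -(x - m) ^ 2 / (2 * v ^ 2) from by ring,
    mul_comm v]

lemma gaussPdf_symm (m v x : ℝ) : gaussPdf m v x = gaussPdf x v m := by
  unfold gaussPdf; ring_nf

lemma gaussPdf_pos {v : ℝ} (hv : 0 < v) (m x : ℝ) : 0 < gaussPdf m v x := by
  rw [gaussPdf_eq hv]; exact div_pos (stdg_pos _) hv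

lemma gaussPdf_le {v : ℝ} (hv : 0 < v) (m x : ℝ) :
    gaussPdf m v x ≤ 1 / (v * Real.sqrt (2 * Real.pi)) := by
  rw [gaussPdf_eq hv, div_le_iff₀ hv]
  calc stdg ((x - m)/v) ≤ 1 / Real.sqrt (2 * Real.pi) := stdg_le _
    _ = 1 / (v * Real.sqrt (2 * Real.pi)) * v := by field_simp
  
lemma gaussPdf_cont {v : ℝ} (m : ℝ) : Continuous (gaussPdf m v) := by
  unfold gaussPdf
  exact (Real.continuous_exp.comp
    (((continuous_id.sub continuous_const).pow 2).neg.div_const _)).div_const _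

lemma gaussPdf_integrable {v : ℝ} (hv : 0 < v) (m : ℝ) : Integrable (gaussPdf m v) := by
  have h : Integrable (fun x : ℝ => Real.exp (-(1/(2*v^2)) * x ^ 2)) :=
    integrable_exp_neg_mul_sq (by positivity)
  have h2 : Integrable (fun x : ℝ => Real.exp (-(1/(2*v^2)) * (x - m) ^ 2)) :=
    h.comp_sub_right m
  have := h2.div_const (Real.sqrt (2 * Real.pi * v ^ 2))
  refine this.congr (Filter.Eventually.of_forall fun x => ?_)
  unfold gaussPdf
  simp only []
  rw [show -(1/(2*v^2)) * (x - m) ^ 2 = -(x - m) ^ 2 / (2 * v ^ 2) from by ring]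

lemma integral_gaussPdf {v : ℝ} (hv : 0 < v) (m : ℝ) : ∫ x : ℝ, gaussPdf m v x = 1 := by
  unfold gaussPdf
  rw [integral_div]
  have h1 : (∫ x : ℝ, Real.exp (-(x - m) ^ 2 / (2 * v ^ 2)))
      = ∫ x : ℝ, Real.exp (-(1/(2*v^2)) * x ^ 2) := by
    rw [← integral_sub_right_eq_self (fun x => Real.exp (-(1/(2*v^2)) * x ^ 2)) m]
    congr 1; funext x
    rw [show -(1/(2*v^2)) * (x - m) ^ 2 = -(x - m) ^ 2 / (2 * v ^ 2) from by ring]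
  rw [h1, integral_gaussian]
  rw [show Real.pi / (1/(2*v^2)) = 2 * Real.pi * v ^ 2 by field_simp]
  rw [div_self (ne_of_gt (Real.sqrt_pos.2 (by positivity)))]

lemma gauss_prod {σ v : ℝ} (hσ : 0 < σ) (hv : 0 < v) (ε m f : ℝ) :
    gaussPdf ε σ f * gaussPdf m v f =
      gaussPdf m (Real.sqrt (σ^2 + v^2)) ε *
      gaussPdf ((v^2*ε + σ^2*m)/(σ^2+v^2)) (σ*v/Real.sqrt (σ^2+v^2)) f := by
  have hS : (0:ℝ) < σ^2 + v^2 := by positivity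
  set s := Real.sqrt (σ^2+v^2) with hs_def
  have hs : 0 < s := Real.sqrt_pos.2 hS
  have hs2 : s^2 = σ^2 + v^2 := Real.sq_sqrt hS.le
  have hτ : 0 < σ*v/s := by positivity
  have hσ' : σ ≠ 0 := hσ.ne'
  have hv' : v ≠ 0 := hv.ne'
  have hs' : s ≠ 0 := hs.ne'
  have hS' : σ^2 + v^2 ≠ 0 := hS.ne'
  have harg : -(f-ε)^2/(2*σ^2) + -(f-m)^2/(2*v^2)
      = -(ε-m)^2/(2*s^2) + -(f-(v^2*ε+σ^2*m)/(σ^2+v^2))^2/(2*(σ*v/s)^2) := by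
    rw [div_pow, mul_pow, hs2]
    field_simp
    ring
  have hnorm : σ*Real.sqrt (2*Real.pi)*(v*Real.sqrt (2*Real.pi))
      = s*Real.sqrt (2*Real.pi)*((σ*v/s)*Real.sqrt (2*Real.pi)) := by
    field_simp
  unfold gaussPdf
  rw [sqrt_two_pi_sq hσ, sqrt_two_pi_sq hv, sqrt_two_pi_sq hs, sqrt_two_pi_sq hτ,
    div_mul_div_comm, div_mul_div_comm, ← Real.exp_add, ← Real.exp_add, harg, hnorm]

lemma stdg_even (t : ℝ) : stdg (-t) = stdg t := by unfold stdg; ring_nf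

lemma gaussPdf_eq' {σ : ℝ} (hσ : 0 < σ) (x f : ℝ) :
    gaussPdf x σ f = stdg ((x - f)/σ) / σ := by
  rw [gaussPdf_eq hσ, show (f - x)/σ = -((x - f)/σ) by ring, stdg_even]

lemma tendsto_div_atBot {s : ℝ} (hs : 0 < s) (m : ℝ) :
    Filter.Tendsto (fun e : ℝ => (e - m)/s) Filter.atBot Filter.atBot := by
  apply Filter.Tendsto.atBot_div_const hs
  simpa [sub_eq_add_neg] using
    Filter.tendsto_atBot_add_const_right Filter.atBot (-m) (Filter.tendsto_id (α := ℝ))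

lemma abs_Phi_le (x : ℝ) : |Phi x| ≤ 1 := abs_le.2 ⟨by linarith [Phi_nonneg x], Phi_le_one x⟩

lemma integrable_Phi_pow_mul_gauss {σ v : ℝ} (hσ : 0 < σ) (hv : 0 < v) (ε m : ℝ) (p : ℕ) :
    Integrable (fun f : ℝ => Phi ((ε - f)/σ) ^ p * gaussPdf m v f) := by
  refine (gaussPdf_integrable hv m).bdd_mul (c := 1) ?_ (Filter.Eventually.of_forall fun f => ?_)
  · exact ((Phi_cont.comp (by fun_prop)).pow p).aestronglyMeasurable
  · rw [norm_pow]
    exact pow_le_one₀ (norm_nonneg _) (abs_Phi_le _)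

lemma eq_of_hasDerivAt_eq {A B d : ℝ → ℝ}
    (hA : ∀ x, HasDerivAt A (d x) x) (hB : ∀ x, HasDerivAt B (d x) x)
    (hlim : Filter.Tendsto (fun x => A x - B x) Filter.atBot (nhds 0)) (x : ℝ) :
    A x = B x := by
  have hdiff : Differentiable ℝ (fun y => A y - B y) :=
    fun y => ((hA y).sub (hB y)).differentiableAt
  have hd0 : ∀ y, deriv (fun y => A y - B y) y = 0 := fun y => by
    exact ((hA y).sub (hB y)).deriv.trans (sub_self _)
  have hconst : ∀ y, A y - B y = A x - B x := fun y =>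
    is_const_of_deriv_eq_zero hdiff hd0 y x
  rw [funext hconst] at hlim
  have := tendsto_nhds_unique hlim tendsto_const_nhds
  linarith

lemma integral_gauss_prod {σ v : ℝ} (hσ : 0 < σ) (hv : 0 < v) (m e : ℝ) :
    (∫ f : ℝ, gaussPdf e σ f * gaussPdf m v f) = gaussPdf m (Real.sqrt (σ^2+v^2)) e := by
  have hS : (0:ℝ) < σ^2 + v^2 := by positivity
  have hs : 0 < Real.sqrt (σ^2+v^2) := Real.sqrt_pos.2 hS
  have hτ : 0 < σ*v/Real.sqrt (σ^2+v^2) := by positivity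
  calc (∫ f : ℝ, gaussPdf e σ f * gaussPdf m v f)
      = ∫ f : ℝ, gaussPdf m (Real.sqrt (σ^2+v^2)) e *
          gaussPdf ((v^2*e + σ^2*m)/(σ^2+v^2)) (σ*v/Real.sqrt (σ^2+v^2)) f := by
        congr 1; funext f; rw [gauss_prod hσ hv]
    _ = gaussPdf m (Real.sqrt (σ^2+v^2)) e *
          ∫ f : ℝ, gaussPdf ((v^2*e + σ^2*m)/(σ^2+v^2)) (σ*v/Real.sqrt (σ^2+v^2)) f :=
        integral_const_mul _ _
    _ = gaussPdf m (Real.sqrt (σ^2+v^2)) e := by rw [integral_gaussPdf hτ]; ring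

lemma hasDerivAt_meanPhi {σ v : ℝ} (hσ : 0 < σ) (hv : 0 < v) (m : ℝ) (e : ℝ) :
    HasDerivAt (fun e : ℝ => ∫ f : ℝ, Phi ((e - f)/σ) * gaussPdf m v f)
      (gaussPdf m (Real.sqrt (σ^2+v^2)) e) e := by
  have key := hasDerivAt_integral_of_dominated_loc_of_deriv_le
    (F := fun (x : ℝ) (f : ℝ) => Phi ((x - f)/σ) * gaussPdf m v f)
    (F' := fun (x : ℝ) (f : ℝ) => gaussPdf x σ f * gaussPdf m v f)
    (x₀ := e) (bound := fun f => (1/(σ * Real.sqrt (2*Real.pi))) * gaussPdf m v f)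
    (Metric.ball_mem_nhds _ one_pos)
    (Filter.Eventually.of_forall fun x =>
      ((Phi_cont.comp (by fun_prop : Continuous fun f : ℝ => (x - f)/σ)).mul
        (gaussPdf_cont m)).aestronglyMeasurable)
    (by simpa using integrable_Phi_pow_mul_gauss hσ hv e m 1)
    (((gaussPdf_cont e).mul (gaussPdf_cont m)).aestronglyMeasurable)
    (Filter.Eventually.of_forall fun f => fun x _ => by
      rw [Real.norm_eq_abs, abs_of_pos (mul_pos (gaussPdf_pos hσ x f) (gaussPdf_pos hv m f))]
      exact mul_le_mul_of_nonneg_right (gaussPdf_le hσ x f) (gaussPdf_pos hv m f).le)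
    (((gaussPdf_integrable hv m).const_mul _))
    (Filter.Eventually.of_forall fun f => fun x _ => by
      have h1 : HasDerivAt (fun x : ℝ => (x - f)/σ) (1/σ) x :=
        ((hasDerivAt_id x).sub_const f).div_const σ
      have h3 := ((hasDerivAt_Phi ((x - f)/σ)).comp x h1).mul_const (gaussPdf m v f)
      refine HasDerivAt.congr_deriv h3 (Eq.symm ?_)
      show gaussPdf x σ f * gaussPdf m v f = _
      rw [gaussPdf_eq' hσ]
      ring)
  have h2 := key.2
  rwa [integral_gauss_prod hσ hv m e] at h2

lemma tendsto_meanPhi_atBot {σ v : ℝ} (hσ : 0 < σ) (hv : 0 < v) (m : ℝ) (p : ℕ) (hp : p ≠ 0) :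
    Filter.Tendsto (fun e : ℝ => ∫ f : ℝ, Phi ((e - f)/σ) ^ p * gaussPdf m v f)
      Filter.atBot (nhds 0) := by
  have h := tendsto_integral_filter_of_dominated_convergence (μ := volume)
    (F := fun (e : ℝ) (f : ℝ) => Phi ((e - f)/σ) ^ p * gaussPdf m v f)
    (f := fun _ : ℝ => (0:ℝ)) (bound := gaussPdf m v)
    (Filter.Eventually.of_forall fun x =>
      (((Phi_cont.comp (by fun_prop : Continuous fun f : ℝ => (x - f)/σ)).pow p).mul
        (gaussPdf_cont m)).aestronglyMeasurable)
    (Filter.Eventually.of_forall fun e => Filter.Eventually.of_forall fun f => by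
      rw [Real.norm_eq_abs, abs_mul, abs_pow, abs_of_pos (gaussPdf_pos hv m f)]
      calc |Phi ((e - f)/σ)| ^ p * gaussPdf m v f ≤ 1 ^ p * gaussPdf m v f :=
            mul_le_mul_of_nonneg_right
              (pow_le_pow_left₀ (abs_nonneg _) (abs_Phi_le _) p) (gaussPdf_pos hv m f).le
        _ = gaussPdf m v f := by rw [one_pow, one_mul])
    (gaussPdf_integrable hv m)
    (Filter.Eventually.of_forall fun f => by
      have harg : Filter.Tendsto (fun e : ℝ => (e - f)/σ) Filter.atBot Filter.atBot :=
        tendsto_div_atBot hσ f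
      have h0 : Filter.Tendsto (fun e : ℝ => Phi ((e - f)/σ) ^ p) Filter.atBot (nhds 0) := by
        have := (Phi_tendsto_atBot.comp harg).pow p
        rwa [zero_pow hp] at this
      have := h0.mul_const (gaussPdf m v f)
      rwa [zero_mul] at this)
  simpa using h

lemma meanPhi {σ v : ℝ} (hσ : 0 < σ) (hv : 0 < v) (m : ℝ) (ε : ℝ) :
    (∫ f : ℝ, Phi ((ε - f)/σ) * gaussPdf m v f)
      = Phi ((ε - m)/Real.sqrt (σ^2 + v^2)) := by
  have hS : (0:ℝ) < σ^2 + v^2 := by positivity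
  set s := Real.sqrt (σ^2+v^2) with hs_def
  have hs : 0 < s := Real.sqrt_pos.2 hS
  have hB : ∀ e : ℝ, HasDerivAt (fun e : ℝ => Phi ((e - m)/s)) (gaussPdf m s e) e := by
    intro e
    have h1 : HasDerivAt (fun e : ℝ => (e - m)/s) (1/s) e :=
      ((hasDerivAt_id e).sub_const m).div_const s
    have h2 := (hasDerivAt_Phi ((e - m)/s)).comp e h1
    refine HasDerivAt.congr_deriv h2 (Eq.symm ?_)
    rw [gaussPdf_eq hs]
    ring
  have hA0 : Filter.Tendsto (fun e : ℝ => ∫ f : ℝ, Phi ((e - f)/σ) * gaussPdf m v f)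
      Filter.atBot (nhds 0) := by
    have := tendsto_meanPhi_atBot hσ hv m 1 one_ne_zero
    simpa using this
  have hB0 : Filter.Tendsto (fun e : ℝ => Phi ((e - m)/s)) Filter.atBot (nhds 0) :=
    Phi_tendsto_atBot.comp (tendsto_div_atBot hs m)
  have hlim := hA0.sub hB0
  rw [sub_zero] at hlim
  exact eq_of_hasDerivAt_eq (fun e => hasDerivAt_meanPhi hσ hv m e) hB hlim ε

lemma Phi_zero : Phi 0 = 1/2 := by
  have := Phi_neg 0
  rw [neg_zero] at this
  linarith

lemma interval_exp_eq (h k : ℝ) :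
    (∫ x in (0:ℝ)..k, h * Real.exp (-(h*x)^2/2))
      = Real.sqrt (2*Real.pi) * (Phi (h*k) - 1/2) := by
  have hsm := intervalIntegral.smul_integral_comp_mul_left
    (f := fun u : ℝ => Real.exp (-u^2/2)) (a := (0:ℝ)) (b := k) h
  simp only [smul_eq_mul, mul_zero] at hsm
  have h1 : (∫ x in (0:ℝ)..k, h * Real.exp (-(h*x)^2/2))
      = h * ∫ x in (0:ℝ)..k, Real.exp (-(h*x)^2/2) := intervalIntegral.integral_const_mul _ _
  rw [h1]
  have h2 : (∫ x in (0:ℝ)..h*k, Real.exp (-x^2/2))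
      = Real.sqrt (2*Real.pi) * ∫ x in (0:ℝ)..h*k, stdg x := by
    rw [← intervalIntegral.integral_const_mul]
    congr 1; funext x
    unfold stdg
    have hne : Real.sqrt (2*Real.pi) ≠ 0 := ne_of_gt (Real.sqrt_pos.2 (by positivity))
    field_simp
  have h3 : (∫ x in (0:ℝ)..h*k, stdg x) = Phi (h*k) - 1/2 := by
    have := Phi_eq (h*k)
    rw [Phi_zero] at this
    linarith
  calc h * ∫ x in (0:ℝ)..k, Real.exp (-(h*x)^2/2) = ∫ x in (0:ℝ)..h*k, Real.exp (-x^2/2) := hsm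
    _ = Real.sqrt (2*Real.pi) * (Phi (h*k) - 1/2) := by rw [h2, h3]

lemma hasDerivAt_OwenT (k h : ℝ) :
    HasDerivAt (fun h : ℝ => OwenT h k) (-(stdg h) * (Phi (h*k) - 1/2)) h := by
  have key := intervalIntegral.hasDerivAt_integral_of_dominated_loc_of_deriv_le
    (F := fun (y : ℝ) (x : ℝ) => Real.exp (-y^2*(1+x^2)/2) / (1+x^2))
    (F' := fun (y : ℝ) (x : ℝ) => -y * Real.exp (-y^2*(1+x^2)/2))
    (x₀ := h) (a := (0:ℝ)) (b := k) (μ := volume)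
    (bound := fun _ => |h| + 1) (Metric.ball_mem_nhds _ one_pos)
    (Filter.Eventually.of_forall fun y => by
      apply Continuous.aestronglyMeasurable
      have hc : ∀ x : ℝ, (0:ℝ) < 1 + x^2 := fun x => by positivity
      exact (Real.continuous_exp.comp (by fun_prop)).div (by fun_prop)
        (fun x => (hc x).ne'))
    (by
      apply Continuous.intervalIntegrable
      have hc : ∀ x : ℝ, (0:ℝ) < 1 + x^2 := fun x => by positivity
      exact (Real.continuous_exp.comp (by fun_prop)).div (by fun_prop)
        (fun x => (hc x).ne'))
    (by
      apply Continuous.aestronglyMeasurable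
      exact (continuous_const.mul (Real.continuous_exp.comp (by fun_prop))))
    (Filter.Eventually.of_forall fun x => fun _ => fun y hy => by
      rw [Real.norm_eq_abs, abs_mul, abs_neg]
      have he : Real.exp (-y^2*(1+x^2)/2) ≤ 1 :=
        Real.exp_le_one_iff.2 (by nlinarith [sq_nonneg y, sq_nonneg x, sq_nonneg (y*x)])
      have hy' : |y| ≤ |h| + 1 := by
        have := abs_sub_abs_le_abs_sub y h
        have h2 : |y - h| ≤ 1 := by
          rw [Metric.mem_ball, Real.dist_eq] at hy
          linarith
        linarith
      calc |y| * |Real.exp (-y^2*(1+x^2)/2)| ≤ (|h|+1) * 1 := by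
            apply mul_le_mul hy' _ (abs_nonneg _) (by positivity)
            rw [abs_of_pos (Real.exp_pos _)]
            exact he
        _ = |h| + 1 := mul_one _)
    (intervalIntegrable_const)
    (Filter.Eventually.of_forall fun x => fun _ => fun y _ => by
      have hc : (0:ℝ) < 1 + x^2 := by positivity
      have h1 : HasDerivAt (fun y : ℝ => -y^2*(1+x^2)/2) (-y*(1+x^2)) y := by
        have h0 := (hasDerivAt_pow 2 y).const_mul (-(1+x^2)/2)
        have he : (fun y : ℝ => -(1+x^2)/2 * y^2) = fun y : ℝ => -y^2*(1+x^2)/2 := by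
          funext y; ring
        rw [he] at h0
        refine HasDerivAt.congr_deriv h0 (Eq.symm ?_)
        push_cast
        ring
      have h2 := (h1.exp).div_const (1+x^2)
      refine HasDerivAt.congr_deriv h2 (Eq.symm ?_)
      field_simp)
  have h2 := key.2
  unfold OwenT
  have heval : (∫ x in (0:ℝ)..k, -h * Real.exp (-h^2*(1+x^2)/2))
      = -Real.exp (-h^2/2) * (Real.sqrt (2*Real.pi) * (Phi (h*k) - 1/2)) := by
    have hsplit : ∀ x : ℝ, -h * Real.exp (-h^2*(1+x^2)/2)
        = -Real.exp (-h^2/2) * (h * Real.exp (-(h*x)^2/2)) := by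
      intro x
      rw [show (-h^2*(1+x^2)/2 : ℝ) = -h^2/2 + -(h*x)^2/2 by ring, Real.exp_add]
      ring
    rw [intervalIntegral.integral_congr (fun x _ => hsplit x),
      intervalIntegral.integral_const_mul, interval_exp_eq]
  rw [heval] at h2
  have := h2.const_mul (1/(2*Real.pi))
  refine HasDerivAt.congr_deriv this (Eq.symm ?_)
  unfold stdg
  set sq2pi := Real.sqrt (2*Real.pi) with hsq_def
  have hpos : 0 < sq2pi := Real.sqrt_pos.2 (by positivity)
  have hsq : sq2pi * sq2pi = 2*Real.pi := Real.mul_self_sqrt (by positivity)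
  rw [← hsq]
  field_simp

lemma abs_OwenT_le (h k : ℝ) : |OwenT h k| ≤ |k| * Real.exp (-h^2/2) / (2*Real.pi) := by
  unfold OwenT
  rw [abs_mul]
  have hb : ‖∫ x in (0:ℝ)..k, Real.exp (-h^2*(1+x^2)/2) / (1+x^2)‖
      ≤ Real.exp (-h^2/2) * |k - 0| := by
    apply intervalIntegral.norm_integral_le_of_norm_le_const
    intro x _
    rw [Real.norm_eq_abs]
    have hc : (0:ℝ) < 1 + x^2 := by positivity
    rw [abs_of_pos (div_pos (Real.exp_pos _) hc)]
    calc Real.exp (-h^2*(1+x^2)/2) / (1+x^2) ≤ Real.exp (-h^2*(1+x^2)/2) :=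
          div_le_self (Real.exp_pos _).le (by nlinarith [sq_nonneg x])
      _ ≤ Real.exp (-h^2/2) := Real.exp_le_exp.2 (by nlinarith [sq_nonneg x, sq_nonneg h, sq_nonneg (h*x)])
  rw [Real.norm_eq_abs, sub_zero] at hb
  have hpi : (0:ℝ) < 2*Real.pi := by positivity
  rw [abs_of_pos (by positivity : (0:ℝ) < 1/(2*Real.pi))]
  calc 1/(2*Real.pi) * |∫ x in (0:ℝ)..k, Real.exp (-h^2*(1+x^2)/2) / (1+x^2)|
      ≤ 1/(2*Real.pi) * (Real.exp (-h^2/2) * |k|) :=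
        mul_le_mul_of_nonneg_left hb (by positivity)
    _ = |k| * Real.exp (-h^2/2) / (2*Real.pi) := by ring

lemma tendsto_exp_neg_sq : Filter.Tendsto (fun h : ℝ => Real.exp (-h^2/2))
    Filter.atBot (nhds 0) := by
  apply Real.tendsto_exp_atBot.comp
  have hsq : Filter.Tendsto (fun h : ℝ => h*h) Filter.atBot Filter.atTop :=
    Filter.Tendsto.atBot_mul_atBot₀ (Filter.tendsto_id) (Filter.tendsto_id)
  have hneg : Filter.Tendsto (fun h : ℝ => -(h*h)) Filter.atBot Filter.atBot :=
    Filter.tendsto_neg_atTop_atBot.comp hsq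
  have := hneg.atBot_div_const (show (0:ℝ) < 2 by norm_num)
  refine this.congr fun h => by ring

lemma tendsto_OwenT_comp {s : ℝ} (hs : 0 < s) (m k : ℝ) :
    Filter.Tendsto (fun e : ℝ => OwenT ((e - m)/s) k) Filter.atBot (nhds 0) := by
  refine squeeze_zero_norm (fun e => abs_OwenT_le ((e - m)/s) k) ?_
  have h1 := tendsto_exp_neg_sq.comp (tendsto_div_atBot hs m)
  have h2 := (h1.const_mul |k|).div_const (2*Real.pi)
  simpa using h2

lemma sqPhi {σ v : ℝ} (hσ : 0 < σ) (hv : 0 < v) (m : ℝ) (ε : ℝ) :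
    (∫ f : ℝ, Phi ((ε - f)/σ) ^ 2 * gaussPdf m v f)
      = Phi ((ε - m)/Real.sqrt (σ^2 + v^2))
        - 2 * OwenT ((ε - m)/Real.sqrt (σ^2 + v^2)) (σ/Real.sqrt (σ^2 + 2*v^2)) := by
  have hS : (0:ℝ) < σ^2 + v^2 := by positivity
  have hW : (0:ℝ) < σ^2 + 2*v^2 := by positivity
  set s := Real.sqrt (σ^2+v^2) with hs_def
  set w := Real.sqrt (σ^2+2*v^2) with hw_def
  have hs : 0 < s := Real.sqrt_pos.2 hS
  have hw : 0 < w := Real.sqrt_pos.2 hW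
  have hs2 : s^2 = σ^2 + v^2 := Real.sq_sqrt hS.le
  have hw2 : w^2 = σ^2 + 2*v^2 := Real.sq_sqrt hW.le
  have hτ : 0 < σ*v/s := by positivity
  set K := σ/w with hK_def
  -- arithmetic: the posterior-mean argument
  have hsqrt : Real.sqrt (σ^2 + (σ*v/s)^2) = σ*w/s := by
    have h1 : σ^2 + (σ*v/s)^2 = (σ*w/s)^2 := by
      rw [div_pow, mul_pow, hs2, div_pow, mul_pow, hw2, hs2]
      field_simp
      ring
    rw [h1]
    exact Real.sqrt_sq (by positivity)
  have harg : ∀ e : ℝ, (e - (v^2*e+σ^2*m)/(σ^2+v^2))/(σ*w/s) = ((e - m)/s)*K := by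
    intro e
    rw [hK_def]
    rw [show e - (v^2*e+σ^2*m)/(σ^2+v^2) = σ^2*(e-m)/(σ^2+v^2) from by field_simp; ring]
    rw [← hs2]
    field_simp
  -- common derivative
  set d : ℝ → ℝ := fun e => 2 * gaussPdf m s e * Phi (((e - m)/s)*K) with hd_def
  -- LHS derivative
  have hA : ∀ e : ℝ, HasDerivAt (fun e : ℝ => ∫ f : ℝ, Phi ((e - f)/σ) ^ 2 * gaussPdf m v f)
      (d e) e := by
    intro e
    have key := hasDerivAt_integral_of_dominated_loc_of_deriv_le
      (F := fun (x : ℝ) (f : ℝ) => Phi ((x - f)/σ) ^ 2 * gaussPdf m v f)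
      (F' := fun (x : ℝ) (f : ℝ) => 2 * Phi ((x - f)/σ) * (gaussPdf x σ f * gaussPdf m v f))
      (x₀ := e) (bound := fun f => (2/(σ * Real.sqrt (2*Real.pi))) * gaussPdf m v f)
      (Metric.ball_mem_nhds _ one_pos)
      (Filter.Eventually.of_forall fun x =>
        (((Phi_cont.comp (by fun_prop : Continuous fun f : ℝ => (x - f)/σ)).pow 2).mul
          (gaussPdf_cont m)).aestronglyMeasurable)
      (integrable_Phi_pow_mul_gauss hσ hv e m 2)
      ((((continuous_const.mul (Phi_cont.comp
          (by fun_prop : Continuous fun f : ℝ => (e - f)/σ))).mul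
        ((gaussPdf_cont e).mul (gaussPdf_cont m)))).aestronglyMeasurable)
      (Filter.Eventually.of_forall fun f => fun x _ => by
        show |2 * Phi ((x - f)/σ) * (gaussPdf x σ f * gaussPdf m v f)|
          ≤ (2/(σ * Real.sqrt (2*Real.pi))) * gaussPdf m v f
        rw [abs_mul, abs_mul]
        rw [abs_of_pos (mul_pos (gaussPdf_pos hσ x f) (gaussPdf_pos hv m f))]
        rw [show (2/(σ * Real.sqrt (2*Real.pi))) * gaussPdf m v f
            = (|(2:ℝ)| * 1) * ((1/(σ * Real.sqrt (2*Real.pi))) * gaussPdf m v f) from by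
          rw [abs_of_pos (by norm_num : (0:ℝ) < 2)]; ring]
        apply mul_le_mul
        · exact mul_le_mul_of_nonneg_left (abs_Phi_le _) (abs_nonneg _)
        · exact mul_le_mul_of_nonneg_right (gaussPdf_le hσ x f) (gaussPdf_pos hv m f).le
        · exact (mul_pos (gaussPdf_pos hσ x f) (gaussPdf_pos hv m f)).le
        · positivity)
      (((gaussPdf_integrable hv m).const_mul _))
      (Filter.Eventually.of_forall fun f => fun x _ => by
        have h1 : HasDerivAt (fun x : ℝ => (x - f)/σ) (1/σ) x :=
          ((hasDerivAt_id x).sub_const f).div_const σ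
        have h2 := ((hasDerivAt_Phi ((x - f)/σ)).comp x h1).pow 2
        have h3 := h2.mul_const (gaussPdf m v f)
        refine HasDerivAt.congr_deriv h3 (Eq.symm ?_)
        show 2 * Phi ((x - f)/σ) * (gaussPdf x σ f * gaussPdf m v f) = _
        simp only [Function.comp_def]
        rw [gaussPdf_eq' hσ]
        push_cast
        ring)
    have h2 := key.2
    have heval : (∫ f : ℝ, 2 * Phi ((e - f)/σ) * (gaussPdf e σ f * gaussPdf m v f)) = d e := by
      calc (∫ f : ℝ, 2 * Phi ((e - f)/σ) * (gaussPdf e σ f * gaussPdf m v f))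
          = ∫ f : ℝ, (2 * gaussPdf m s e) *
              (Phi ((e - f)/σ) * gaussPdf ((v^2*e+σ^2*m)/(σ^2+v^2)) (σ*v/s) f) := by
            congr 1; funext f
            rw [gauss_prod hσ hv e m f, ← hs_def]
            ring
        _ = (2 * gaussPdf m s e) *
              ∫ f : ℝ, Phi ((e - f)/σ) * gaussPdf ((v^2*e+σ^2*m)/(σ^2+v^2)) (σ*v/s) f :=
            integral_const_mul _ _
        _ = (2 * gaussPdf m s e) * Phi ((e - (v^2*e+σ^2*m)/(σ^2+v^2))/Real.sqrt (σ^2 + (σ*v/s)^2)) := by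
            rw [meanPhi hσ hτ]
        _ = d e := by rw [hsqrt, harg e, hd_def]
    rwa [heval] at h2
  -- RHS derivative
  have hB : ∀ e : ℝ, HasDerivAt (fun e : ℝ => Phi ((e - m)/s) - 2 * OwenT ((e - m)/s) K)
      (d e) e := by
    intro e
    have h1 : HasDerivAt (fun e : ℝ => (e - m)/s) (1/s) e :=
      ((hasDerivAt_id e).sub_const m).div_const s
    have hphi := (hasDerivAt_Phi ((e - m)/s)).comp e h1
    have howen := ((hasDerivAt_OwenT K ((e - m)/s)).comp e h1).const_mul 2
    have hcomb := hphi.sub howen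
    refine HasDerivAt.congr_deriv hcomb (Eq.symm ?_)
    show 2 * gaussPdf m s e * Phi ((e - m)/s * K) = _
    rw [gaussPdf_eq hs]
    ring
  -- limits
  have hA0 : Filter.Tendsto (fun e : ℝ => ∫ f : ℝ, Phi ((e - f)/σ) ^ 2 * gaussPdf m v f)
      Filter.atBot (nhds 0) := tendsto_meanPhi_atBot hσ hv m 2 two_ne_zero
  have hB0 : Filter.Tendsto (fun e : ℝ => Phi ((e - m)/s) - 2 * OwenT ((e - m)/s) K)
      Filter.atBot (nhds 0) := by
    have h1 : Filter.Tendsto (fun e : ℝ => Phi ((e - m)/s)) Filter.atBot (nhds 0) :=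
      Phi_tendsto_atBot.comp (tendsto_div_atBot hs m)
    have h2 := (tendsto_OwenT_comp hs m K).const_mul 2
    have := h1.sub h2
    simpa using this
  have hlim := hA0.sub hB0
  rw [sub_zero] at hlim
  exact eq_of_hasDerivAt_eq hA hB hlim ε

theorem stmt_1 (σn v ε m c : ℝ) (hσ : 0 < σn) (hv : 0 < v) (hc : 0 ≤ c) :
    (∫ f : ℝ, c ^ 2 * Phi ((ε - f) / σn) ^ 2 * gaussPdf m v f)
      - (∫ f : ℝ, c * Phi ((ε - f) / σn) * gaussPdf m v f) ^ 2
      = c ^ 2 *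
        (Phi ((ε - m) / Real.sqrt (σn ^ 2 + v ^ 2))
            * Phi (-((ε - m) / Real.sqrt (σn ^ 2 + v ^ 2)))
          - 2 * OwenT ((ε - m) / Real.sqrt (σn ^ 2 + v ^ 2))
              (σn / Real.sqrt (σn ^ 2 + 2 * v ^ 2))) := by
  have h1 : (∫ f : ℝ, c ^ 2 * Phi ((ε - f) / σn) ^ 2 * gaussPdf m v f)
      = c ^ 2 * ∫ f : ℝ, Phi ((ε - f) / σn) ^ 2 * gaussPdf m v f := by
    rw [← integral_const_mul]; congr 1; funext f; ring
  have h2 : (∫ f : ℝ, c * Phi ((ε - f) / σn) * gaussPdf m v f)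
      = c * ∫ f : ℝ, Phi ((ε - f) / σn) * gaussPdf m v f := by
    rw [← integral_const_mul]; congr 1; funext f; ring
  rw [h1, h2, sqPhi hσ hv m ε, meanPhi hσ hv m ε, Phi_neg]
  ring
end

section
/- Let s > 0, τ > 0 and ε, m₀ ∈ ℝ. Then ∫_ℝ [Φ((ε − m)/s) − Φ((ε − m)/s)²] · N(m | m₀, τ²) dm = 2·T((ε − m₀)/√(s² + τ²), s/√(s² + 2τ²)). -/
open MeasureTheory Real Set

lemma g_eq : (fun t : ℝ => Real.exp (-t^2/2)) = fun t => Real.exp (-(1/2 : ℝ)*t^2) := by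
  funext t; ring_nf

lemma integrable_g : Integrable (fun t : ℝ => Real.exp (-t^2/2)) := by
  rw [g_eq]; exact integrable_exp_neg_mul_sq (by norm_num)

lemma continuous_g : Continuous (fun t : ℝ => Real.exp (-t^2/2)) := by continuity

lemma integral_g : (∫ t : ℝ, Real.exp (-t^2/2)) = Real.sqrt (2*π) := by
  rw [g_eq, integral_gaussian]; rw [show π/(1/2:ℝ) = 2*π by ring]

lemma integral_g_Iic : (∫ t in Iic (0:ℝ), Real.exp (-t^2/2)) = Real.sqrt (2*π)/2 := by
  have hsym : (∫ t in Iic (0:ℝ), Real.exp (-t^2/2)) = ∫ t in Ioi (0:ℝ), Real.exp (-t^2/2) := by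
    have h := integral_comp_neg_Iic (0:ℝ) (fun t : ℝ => Real.exp (-t^2/2))
    simp only [neg_zero] at h
    rw [← h]
    norm_num
  have htot := intervalIntegral.integral_Iic_add_Ioi (b := (0:ℝ))
    integrable_g.integrableOn integrable_g.integrableOn
  rw [integral_g] at htot
  linarith [hsym, htot]

noncomputable def I0 (x : ℝ) : ℝ := ∫ t in (0:ℝ)..x, Real.exp (-t^2/2)

lemma hasDerivAt_I0 (x : ℝ) : HasDerivAt I0 (Real.exp (-x^2/2)) x :=
  intervalIntegral.integral_hasDerivAt_right (continuous_g.intervalIntegrable _ _)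
    (continuous_g.stronglyMeasurableAtFilter _ _) continuous_g.continuousAt

lemma sqrt2pi_pos : 0 < Real.sqrt (2*π) := Real.sqrt_pos.2 (by positivity)

lemma Phi_eq_s4 (x : ℝ) : Phi x = 1/2 + I0 x / Real.sqrt (2*π) := by
  unfold Phi I0
  rw [integral_div]
  have h1 : (∫ t in Iic x, Real.exp (-t^2/2))
      = (∫ t in Iic (0:ℝ), Real.exp (-t^2/2)) + ∫ t in (0:ℝ)..x, Real.exp (-t^2/2) := by
    have := intervalIntegral.integral_Iic_sub_Iic (a := (0:ℝ)) (b := x) (μ := volume)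
      (integrable_g.integrableOn) (integrable_g.integrableOn)
    linarith
  rw [h1, integral_g_Iic]
  have h2 : Real.sqrt (2*π) ≠ 0 := ne_of_gt sqrt2pi_pos
  field_simp

noncomputable def G (x : ℝ) : ℝ := ∫ u in (0:ℝ)..1, Real.exp (-x^2*(1+u^2)/2) / (1+u^2)

lemma one_add_sq_pos (u : ℝ) : 0 < 1 + u^2 := by positivity

lemma continuous_F (y : ℝ) : Continuous (fun u : ℝ => Real.exp (-y^2*(1+u^2)/2) / (1+u^2)) :=
  Continuous.div (by continuity) (by continuity) (fun u => ne_of_gt (one_add_sq_pos u))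

lemma mul_int_eq_I0 (x : ℝ) : x * ∫ u in (0:ℝ)..1, Real.exp (-(x*u)^2/2) = I0 x := by
  rcases eq_or_ne x 0 with h | h
  · simp [h, I0]
  · have := intervalIntegral.integral_comp_mul_left
      (f := fun t : ℝ => Real.exp (-t^2/2)) (a := (0:ℝ)) (b := 1) (c := x) h
    rw [this]
    simp [I0, smul_eq_mul, mul_comm, ← mul_assoc, mul_inv_cancel₀ h]

lemma hasDerivAt_G (x : ℝ) : HasDerivAt G (-(Real.exp (-x^2/2) * I0 x)) x := by
  have key := intervalIntegral.hasDerivAt_integral_of_dominated_loc_of_deriv_le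
    (F := fun y u => Real.exp (-y^2*(1+u^2)/2) / (1+u^2))
    (F' := fun y u => -y * Real.exp (-y^2*(1+u^2)/2))
    (x₀ := x) (a := 0) (b := 1) (μ := volume) (bound := fun _ => |x| + 1)
    (s := Metric.ball x 1) (Metric.ball_mem_nhds x one_pos)
    ?_ ?_ ?_ ?_ ?_ ?_
  · obtain ⟨-, hd⟩ := key
    convert (config := { preTransparency := .default }) hd using 1
    have : ∀ u : ℝ, -x * Real.exp (-x^2*(1+u^2)/2)
        = (-Real.exp (-x^2/2)) * (x * Real.exp (-(x*u)^2/2)) := by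
      intro u
      rw [show -x^2*(1+u^2)/2 = -x^2/2 + -(x*u)^2/2 by ring, Real.exp_add]
      ring
    simp_rw [this]
    rw [intervalIntegral.integral_const_mul, intervalIntegral.integral_const_mul]
    linear_combination Real.exp (-x^2/2) * mul_int_eq_I0 x
  · filter_upwards with y
    exact ((continuous_F y).aestronglyMeasurable).restrict
  · exact ((continuous_F x).intervalIntegrable _ _)
  · exact (Continuous.aestronglyMeasurable (by continuity)).restrict
  · filter_upwards with u _ y hy
    have h1 : Real.exp (-y^2*(1+u^2)/2) ≤ 1 := by
      apply Real.exp_le_one_iff.2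
      nlinarith [sq_nonneg y, sq_nonneg u, sq_nonneg (y*u)]
    have h2 : |y| ≤ |x| + 1 := by
      have := abs_sub_abs_le_abs_sub y x
      rw [Metric.mem_ball, Real.dist_eq] at hy
      linarith [le_of_lt hy]
    calc ‖-y * Real.exp (-y^2*(1+u^2)/2)‖ = |y| * Real.exp (-y^2*(1+u^2)/2) := by
          rw [norm_mul, norm_neg, Real.norm_eq_abs, Real.norm_eq_abs,
            abs_of_pos (Real.exp_pos _)]
      _ ≤ (|x| + 1) * 1 := by
          apply mul_le_mul h2 h1 (le_of_lt (Real.exp_pos _)) (by positivity)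
      _ = |x| + 1 := by ring
  · exact intervalIntegrable_const
  · filter_upwards with u _ y hy
    have hinner : HasDerivAt (fun y : ℝ => -y^2*(1+u^2)/2) (-y*(1+u^2)) y := by
      have := ((hasDerivAt_pow 2 y).const_mul (-(1+u^2)/2))
      convert (config := { preTransparency := .default }) this using 1
      · funext z; ring
      · ring
    have := (hinner.exp).div_const (1+u^2)
    convert (config := { preTransparency := .default }) this using 1
    field_simp


lemma G_eq (x : ℝ) : G x = π/4 - I0 x^2/2 := by
  have hH : ∀ y : ℝ, HasDerivAt (fun z => G z + I0 z^2/2) 0 y := by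
    intro y
    have h1 := hasDerivAt_G y
    have h2 := ((hasDerivAt_I0 y).pow 2).div_const 2
    have := h1.add h2
    convert (config := { preTransparency := .default }) this using 1
    ring
  have hconst : ∀ y : ℝ, G y + I0 y^2/2 = G 0 + I0 0^2/2 := by
    intro y
    have hd : Differentiable ℝ (fun z => G z + I0 z^2/2) := fun z => (hH z).differentiableAt
    exact is_const_of_deriv_eq_zero hd (fun z => (hH z).deriv) y 0
  have hG0 : G 0 = π/4 := by
    unfold G
    simp only [ne_eq, OfNat.ofNat_ne_zero, not_false_eq_true, zero_pow, neg_zero, zero_mul,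
      zero_div, Real.exp_zero]
    rw [show (fun u : ℝ => (1:ℝ)/(1+u^2)) = fun u : ℝ => 1/(1+u^2) from rfl]
    rw [integral_one_div_one_add_sq]
    simp [Real.arctan_one]
  have hI00 : I0 0 = 0 := by simp [I0]
  have := hconst x
  rw [hG0, hI00] at this
  linarith

lemma phi_diff_eq (x : ℝ) : Phi x - Phi x^2 = (1/π) * G x := by
  rw [Phi_eq_s4, G_eq]
  have hπ : (0:ℝ) < π := Real.pi_pos
  have hd : (I0 x / Real.sqrt (2*π))^2 = I0 x^2/(2*π) := by
    rw [div_pow, Real.sq_sqrt (by positivity)]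
  rw [show (1/2 + I0 x / Real.sqrt (2*π)) - (1/2 + I0 x / Real.sqrt (2*π))^2
      = 1/4 - (I0 x / Real.sqrt (2*π))^2 by ring, hd]
  field_simp


lemma integrable_exp_quad (a c : ℝ) (ha : 0 < a) :
    Integrable (fun m : ℝ => Real.exp (-a*(m-c)^2)) := by
  have h := (integrable_exp_neg_mul_sq ha)
  have := h.comp_sub_right c
  simpa using this

lemma integral_exp_quad (a c : ℝ) (ha : 0 < a) :
    ∫ m : ℝ, Real.exp (-a*(m-c)^2) = Real.sqrt (π/a) := by
  rw [← integral_gaussian a]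
  exact integral_sub_right_eq_self (fun m => Real.exp (-a*m^2)) c

lemma gauss_conv (a b μ ν : ℝ) (ha : 0 < a) (hb : 0 < b) :
    ∫ m : ℝ, Real.exp (-a*(m-μ)^2) * Real.exp (-b*(m-ν)^2)
      = Real.sqrt (π/(a+b)) * Real.exp (-(a*b/(a+b))*(μ-ν)^2) := by
  have hab : (0:ℝ) < a + b := by linarith
  have key : ∀ m : ℝ, Real.exp (-a*(m-μ)^2) * Real.exp (-b*(m-ν)^2)
      = Real.exp (-(a+b)*(m - (a*μ+b*ν)/(a+b))^2) * Real.exp (-(a*b/(a+b))*(μ-ν)^2) := by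
    intro m
    rw [← Real.exp_add, ← Real.exp_add]
    congr 1
    field_simp
    ring
  simp_rw [key]
  rw [integral_mul_const, integral_exp_quad _ _ hab]

lemma inner_int (s τ ε m₀ : ℝ) (hs : 0 < s) (hτ : 0 < τ) (u : ℝ) :
    ∫ m : ℝ, Real.exp (-((ε-m)/s)^2*(1+u^2)/2) * gaussPdf m₀ τ m
      = s / Real.sqrt (s^2+τ^2+τ^2*u^2)
        * Real.exp (-((ε-m₀)^2*(1+u^2))/(2*(s^2+τ^2+τ^2*u^2))) := by
  have hs' : s ≠ 0 := hs.ne'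
  have hτ' : τ ≠ 0 := hτ.ne'
  set q : ℝ := s^2+τ^2+τ^2*u^2 with hq
  have hqpos : 0 < q := by positivity
  have hu : (0:ℝ) < 1 + u^2 := by positivity
  set a : ℝ := (1+u^2)/(2*s^2) with hadef
  set b : ℝ := 1/(2*τ^2) with hbdef
  have ha : 0 < a := by positivity
  have hb : 0 < b := by positivity
  have h1 : ∀ m : ℝ, Real.exp (-((ε-m)/s)^2*(1+u^2)/2) * gaussPdf m₀ τ m
      = Real.exp (-a*(m-ε)^2) * Real.exp (-b*(m-m₀)^2) / Real.sqrt (2*π*τ^2) := by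
    intro m
    unfold gaussPdf
    rw [← mul_div_assoc, ← Real.exp_add, ← Real.exp_add]
    congr 2
    rw [hadef, hbdef, div_pow]
    field_simp
    ring
  simp_rw [h1]
  rw [integral_div, gauss_conv a b ε m₀ ha hb]
  have hab_eq : a + b = q/(2*s^2*τ^2) := by
    rw [hadef, hbdef, hq]
    field_simp
    ring
  have hsq : Real.sqrt (π/(a+b)) / Real.sqrt (2*π*τ^2) = s / Real.sqrt q := by
    rw [hab_eq]
    rw [show π / (q/(2*s^2*τ^2)) = (s^2/q) * (2*π*τ^2) by field_simp]
    rw [Real.sqrt_mul (by positivity : (0:ℝ) ≤ s^2/q)]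
    rw [mul_div_assoc, div_self (by positivity : Real.sqrt (2*π*τ^2) ≠ 0), mul_one]
    rw [Real.sqrt_div (by positivity : (0:ℝ) ≤ s^2), Real.sqrt_sq hs.le]
  rw [show ∀ X E C : ℝ, X * E / C = (X / C) * E from fun X E C => by ring]
  rw [hsq]
  congr 2
  rw [hadef, hbdef, hq]
  have hden : (1+u^2)/(2*s^2) + 1/(2*τ^2) ≠ 0 := by positivity
  field_simp [hs', hτ']
  ring


set_option maxHeartbeats 1000000 in
lemma subst_lemma (s τ c : ℝ) (hs : 0 < s) (hτ : 0 < τ) :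
    ∫ u in (0:ℝ)..1, s * Real.exp (-(c^2*(1+u^2))/(2*(s^2+τ^2+τ^2*u^2)))
        / ((1+u^2) * Real.sqrt (s^2+τ^2+τ^2*u^2))
      = ∫ x in (0:ℝ)..(s/Real.sqrt (s^2+2*τ^2)),
          Real.exp (-(c^2/(s^2+τ^2)) * (1+x^2) / 2) / (1+x^2) := by
  set g : ℝ → ℝ := fun x => Real.exp (-(c^2/(s^2+τ^2)) * (1+x^2) / 2) / (1+x^2) with hgdef
  set f : ℝ → ℝ := fun u => s*u / Real.sqrt (s^2+τ^2+τ^2*u^2) with hfdef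
  set f' : ℝ → ℝ :=
    fun u => s*(s^2+τ^2) / ((s^2+τ^2+τ^2*u^2) * Real.sqrt (s^2+τ^2+τ^2*u^2)) with hf'def
  have hst : (0:ℝ) < s^2+τ^2 := by positivity
  have hqpos : ∀ u : ℝ, (0:ℝ) < s^2+τ^2+τ^2*u^2 := fun u => by positivity
  have hrpos : ∀ u : ℝ, (0:ℝ) < Real.sqrt (s^2+τ^2+τ^2*u^2) := fun u =>
    Real.sqrt_pos.2 (hqpos u)
  have hr2 : ∀ u : ℝ, Real.sqrt (s^2+τ^2+τ^2*u^2) ^ 2 = s^2+τ^2+τ^2*u^2 := fun u =>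
    Real.sq_sqrt (hqpos u).le
  have hderiv : ∀ u ∈ uIcc (0:ℝ) 1, HasDerivAt f (f' u) u := by
    intro u _
    have hq : HasDerivAt (fun u : ℝ => s^2+τ^2+τ^2*u^2) (2*τ^2*u) u := by
      have := ((hasDerivAt_pow 2 u).const_mul (τ^2)).const_add (s^2+τ^2)
      convert (config := { preTransparency := .default }) this using 1
      ring
    have hsqrt : HasDerivAt (fun u => Real.sqrt (s^2+τ^2+τ^2*u^2))
        (1/(2*Real.sqrt (s^2+τ^2+τ^2*u^2)) * (2*τ^2*u)) u :=
      (Real.hasDerivAt_sqrt (hqpos u).ne').comp u hq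
    have hnum : HasDerivAt (fun u : ℝ => s*u) s u := by
      simpa using (hasDerivAt_id u).const_mul s
    have hdiv := hnum.div hsqrt (hrpos u).ne'
    convert (config := { preTransparency := .default }) hdiv using 1
    simp only [hf'def]
    set r := Real.sqrt (s^2+τ^2+τ^2*u^2) with hrdef
    have h2 : r^2 = s^2+τ^2+τ^2*u^2 := hr2 u
    have hrne : r ≠ 0 := (hrpos u).ne'
    have h4 : s^2+τ^2 = r^2 - τ^2*u^2 := by linarith [h2]
    rw [← h2, h4]
    field_simp
  have hcontf' : ContinuousOn f' (uIcc (0:ℝ) 1) := by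
    have hqc : Continuous (fun u : ℝ => s^2+τ^2+τ^2*u^2) := by continuity
    exact (continuous_const.div (hqc.mul (Real.continuous_sqrt.comp hqc))
      (fun u => (mul_pos (hqpos u) (hrpos u)).ne')).continuousOn
  have hcontg : Continuous g := by
    apply Continuous.div (by continuity) (by continuity)
    intro x; positivity
  have key := intervalIntegral.integral_comp_smul_deriv hderiv hcontf' hcontg
  have hpt : ∀ u : ℝ, f' u • g (f u)
      = s * Real.exp (-(c^2*(1+u^2))/(2*(s^2+τ^2+τ^2*u^2)))
        / ((1+u^2) * Real.sqrt (s^2+τ^2+τ^2*u^2)) := by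
    intro u
    have h2 : Real.sqrt (s^2+τ^2+τ^2*u^2) ^ 2 = s^2+τ^2+τ^2*u^2 := hr2 u
    have hupos : (0:ℝ) < 1 + u^2 := by positivity
    have hrne : Real.sqrt (s^2+τ^2+τ^2*u^2) ≠ 0 := (hrpos u).ne'
    have hfu2 : 1 + (f u)^2 = (1+u^2)*(s^2+τ^2) / (s^2+τ^2+τ^2*u^2) := by
      rw [hfdef]
      simp only
      rw [div_pow, h2]
      field_simp
      ring
    have hgfu : g (f u) = Real.exp (-(c^2*(1+u^2))/(2*(s^2+τ^2+τ^2*u^2)))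
        * (s^2+τ^2+τ^2*u^2) / ((1+u^2)*(s^2+τ^2)) := by
      show Real.exp (-(c^2/(s^2+τ^2)) * (1+(f u)^2) / 2) / (1+(f u)^2) = _
      rw [hfu2]
      have hexpeq : -(c^2/(s^2+τ^2)) * ((1+u^2)*(s^2+τ^2)/(s^2+τ^2+τ^2*u^2)) / 2
          = -(c^2*(1+u^2))/(2*(s^2+τ^2+τ^2*u^2)) := by
        field_simp
      rw [hexpeq, div_div_eq_mul_div]
    rw [hgfu, hf'def]
    simp only [smul_eq_mul]
    field_simp
  calc ∫ u in (0:ℝ)..1, s * Real.exp (-(c^2*(1+u^2))/(2*(s^2+τ^2+τ^2*u^2)))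
        / ((1+u^2) * Real.sqrt (s^2+τ^2+τ^2*u^2))
      = ∫ u in (0:ℝ)..1, f' u • g (f u) := by
        apply intervalIntegral.integral_congr
        intro u _
        exact (hpt u).symm
    _ = ∫ x in (f 0)..(f 1), g x := key
    _ = ∫ x in (0:ℝ)..(s/Real.sqrt (s^2+2*τ^2)), g x := by
        have hf0 : f 0 = 0 := by simp [hfdef]
        have hf1 : f 1 = s/Real.sqrt (s^2+2*τ^2) := by
          simp only [hfdef, one_pow, mul_one]
          rw [show s^2+τ^2+τ^2 = s^2+2*τ^2 by ring]
        rw [hf0, hf1]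


lemma gaussPdf_pos_s4 (m₀ τ m : ℝ) (hτ : 0 < τ) : 0 < gaussPdf m₀ τ m := by
  unfold gaussPdf
  positivity

lemma integrable_gaussPdf (m₀ τ : ℝ) (hτ : 0 < τ) : Integrable (gaussPdf m₀ τ) := by
  have h := (integrable_exp_quad (1/(2*τ^2)) m₀ (by positivity)).div_const
    (Real.sqrt (2*π*τ^2))
  apply h.congr
  filter_upwards with m
  unfold gaussPdf
  congr 2
  field_simp

lemma continuous_gaussPdf (m₀ τ : ℝ) : Continuous (gaussPdf m₀ τ) := by
  unfold gaussPdf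
  fun_prop

theorem stmt_4 (s τ ε m₀ : ℝ) (hs : 0 < s) (hτ : 0 < τ) :
    ∫ m : ℝ, (Phi ((ε - m) / s) - Phi ((ε - m) / s) ^ 2) * gaussPdf m₀ τ m
      = 2 * OwenT ((ε - m₀) / Real.sqrt (s ^ 2 + τ ^ 2))
          (s / Real.sqrt (s ^ 2 + 2 * τ ^ 2)) := by
  have hst : (0:ℝ) < s^2+τ^2 := by positivity
  set k : ℝ → ℝ → ℝ :=
    fun m u => Real.exp (-((ε-m)/s)^2*(1+u^2)/2) / (1+u^2) * gaussPdf m₀ τ m with hk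
  have hcont_k : Continuous (Function.uncurry k) := by
    apply Continuous.mul
    · apply Continuous.div
      · fun_prop
      · fun_prop
      · intro p
        have : (0:ℝ) < 1 + p.2^2 := by positivity
        exact this.ne'
    · exact (continuous_gaussPdf m₀ τ).comp continuous_fst
  have hk_nonneg : ∀ m u, 0 ≤ k m u := by
    intro m u
    have h1 : (0:ℝ) < 1 + u^2 := by positivity
    have := (gaussPdf_pos_s4 m₀ τ m hτ).le
    positivity
  have hk_le : ∀ m u, k m u ≤ gaussPdf m₀ τ m := by
    intro m u
    rw [hk]
    simp only
    have h1 : (1:ℝ) ≤ 1 + u^2 := by nlinarith [sq_nonneg u]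
    have h2 : Real.exp (-((ε-m)/s)^2*(1+u^2)/2) ≤ 1 := by
      apply Real.exp_le_one_iff.2
      nlinarith [sq_nonneg ((ε-m)/s), sq_nonneg (((ε-m)/s)*u)]
    have h3 : Real.exp (-((ε-m)/s)^2*(1+u^2)/2) / (1+u^2) ≤ 1 := by
      rw [div_le_one (by positivity)]
      linarith
    calc Real.exp (-((ε-m)/s)^2*(1+u^2)/2) / (1+u^2) * gaussPdf m₀ τ m
        ≤ 1 * gaussPdf m₀ τ m :=
          mul_le_mul_of_nonneg_right h3 (gaussPdf_pos_s4 m₀ τ m hτ).le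
      _ = gaussPdf m₀ τ m := one_mul _
  have hInt : Integrable (Function.uncurry k)
      (volume.prod (volume.restrict (Ioc (0:ℝ) 1))) := by
    rw [integrable_prod_iff hcont_k.aestronglyMeasurable]
    constructor
    · filter_upwards with m
      exact ((hcont_k.comp (Continuous.prodMk_right m)).integrableOn_Ioc)
    · apply Integrable.mono (integrable_gaussPdf m₀ τ hτ)
      · exact (hcont_k.aestronglyMeasurable.norm.integral_prod_right').congr
          (by filter_upwards with m; rfl)
      · filter_upwards with m
        have hb : ∫ u in Ioc (0:ℝ) 1, ‖k m u‖ ≤ gaussPdf m₀ τ m := by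
          have : ∫ u in Ioc (0:ℝ) 1, ‖k m u‖ ≤ ∫ _u in Ioc (0:ℝ) 1, gaussPdf m₀ τ m := by
            apply setIntegral_mono_on
            · exact ((hcont_k.comp (Continuous.prodMk_right m)).norm.integrableOn_Ioc)
            · exact integrableOn_const (by simp)
            · exact measurableSet_Ioc
            · intro u _
              rw [Real.norm_eq_abs, abs_of_nonneg (hk_nonneg m u)]
              exact hk_le m u
          simpa using this
        rw [Real.norm_eq_abs, abs_of_nonneg (by positivity), Real.norm_eq_abs,
          abs_of_nonneg (gaussPdf_pos_s4 m₀ τ m hτ).le]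
        exact hb
  calc ∫ m : ℝ, (Phi ((ε - m) / s) - Phi ((ε - m) / s) ^ 2) * gaussPdf m₀ τ m
      = ∫ m : ℝ, (1/π) * (∫ u in Ioc (0:ℝ) 1, k m u) := by
        congr 1
        funext m
        rw [phi_diff_eq]
        have hG : G ((ε-m)/s) = ∫ u in Ioc (0:ℝ) 1, Real.exp (-((ε-m)/s)^2*(1+u^2)/2) / (1+u^2) := by
          unfold G
          rw [intervalIntegral.integral_of_le zero_le_one]
        rw [hG, mul_assoc]
        congr 1
        rw [← integral_mul_const]
    _ = (1/π) * ∫ m : ℝ, ∫ u in Ioc (0:ℝ) 1, k m u := integral_const_mul _ _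
    _ = (1/π) * ∫ u in Ioc (0:ℝ) 1, ∫ m : ℝ, k m u := by
        rw [integral_integral_swap hInt]
    _ = (1/π) * ∫ u in Ioc (0:ℝ) 1,
          s * Real.exp (-((ε-m₀)^2*(1+u^2))/(2*(s^2+τ^2+τ^2*u^2)))
            / ((1+u^2) * Real.sqrt (s^2+τ^2+τ^2*u^2)) := by
        congr 1
        apply setIntegral_congr_fun measurableSet_Ioc
        intro u _
        show (∫ m : ℝ, k m u) = s * Real.exp (-((ε-m₀)^2*(1+u^2))/(2*(s^2+τ^2+τ^2*u^2)))
            / ((1+u^2) * Real.sqrt (s^2+τ^2+τ^2*u^2))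
        have : ∫ m : ℝ, k m u
            = (∫ m : ℝ, Real.exp (-((ε-m)/s)^2*(1+u^2)/2) * gaussPdf m₀ τ m) / (1+u^2) := by
          rw [← integral_div]
          congr 1
          funext m
          rw [hk]
          ring
        rw [this, inner_int s τ ε m₀ hs hτ u]
        have h1 : (0:ℝ) < 1 + u^2 := by positivity
        have h2 : (0:ℝ) < Real.sqrt (s^2+τ^2+τ^2*u^2) := Real.sqrt_pos.2 (by positivity)
        field_simp
    _ = (1/π) * ∫ x in (0:ℝ)..(s/Real.sqrt (s^2+2*τ^2)),
          Real.exp (-((ε-m₀)^2/(s^2+τ^2)) * (1+x^2) / 2) / (1+x^2) := by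
        rw [← subst_lemma s τ (ε-m₀) hs hτ, intervalIntegral.integral_of_le zero_le_one]
    _ = 2 * OwenT ((ε - m₀) / Real.sqrt (s ^ 2 + τ ^ 2))
          (s / Real.sqrt (s ^ 2 + 2 * τ ^ 2)) := by
        unfold OwenT
        rw [show (2:ℝ) * ((1/(2*π)) * ∫ x in (0:ℝ)..(s/Real.sqrt (s^2+2*τ^2)),
            Real.exp (-((ε-m₀)/Real.sqrt (s^2+τ^2))^2 * (1+x^2)/2) / (1+x^2))
          = (1/π) * ∫ x in (0:ℝ)..(s/Real.sqrt (s^2+2*τ^2)),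
            Real.exp (-((ε-m₀)/Real.sqrt (s^2+τ^2))^2 * (1+x^2)/2) / (1+x^2) by
            field_simp]
        congr 1
        apply intervalIntegral.integral_congr
        intro x _
        have hh : ((ε-m₀)/Real.sqrt (s^2+τ^2))^2 = (ε-m₀)^2/(s^2+τ^2) := by
          rw [div_pow, Real.sq_sqrt hst.le]
        rw [hh]
end
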